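/- arXiv:1507.02622 — 2 statements merged into one kernel-verified Lean document; each statement's English description precedes it below -/
import Mathlib

section
/- Let 1 < q < 2, λ > 0, Y > 0, C₁ = 1/(2(2√2λ)^{2−q}), C₂ = 1/2^{3−q}. Define G(ρ,μ) = C₁ρ² + Yρ² sin μ cos μ for 0 ≤ ρ ≤ √2 λ and G(ρ,μ) = C₂ρ^q + Yρ² sin μ cos μ for ρ ≥ √2 λ. If C₂/(Yλ^{2−q}) ≥ (q−1)^{(q−1)/2} q^{−q/2}, then G(ρ,μ) ≥ 0 for all ρ ≥ 0 and all μ such that the point (λ + ρ cos μ, λ + ρ sin μ) has both coordinates positive. -/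
open Real

lemma rpow_two_mul (x : ℝ) (hx : 0 ≤ x) (p : ℝ) : (x ^ p) ^ 2 = x ^ (2 * p) := by
  rw [← Real.rpow_natCast (x ^ p) 2, ← Real.rpow_mul hx]
  norm_num [mul_comm]

lemma amgm (q u : ℝ) (hq : 1 < q) (hu : 0 ≤ u) :
    q ^ q * (q - 1) ^ (1 - q) * u ≤ (1 + u) ^ q := by
  have hq0 : 0 < q := by linarith
  have hq1 : 0 < q - 1 := by linarith
  rcases hu.eq_or_lt with h0 | hu'
  · rw [← h0]
    norm_num [Real.one_rpow]
  · have hw : (q - 1) / q + 1 / q = 1 := by field_simp; ring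
    have hp1 : (0:ℝ) ≤ q / (q - 1) := by positivity
    have hp2 : (0:ℝ) ≤ q * u := by positivity
    have hgm := Real.geom_mean_le_arith_mean2_weighted
      (by positivity : (0:ℝ) ≤ (q-1)/q) (by positivity : (0:ℝ) ≤ 1/q) hp1 hp2 hw
    have heq : (q-1)/q * (q/(q-1)) + 1/q * (q*u) = 1 + u := by field_simp
    rw [heq] at hgm
    have hLnn : 0 ≤ (q/(q-1))^((q-1)/q) * (q*u)^(1/q) := by positivity
    have hpow := Real.rpow_le_rpow hLnn hgm hq0.le
    rw [Real.mul_rpow (Real.rpow_nonneg hp1 _) (Real.rpow_nonneg hp2 _),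
        ← Real.rpow_mul hp1, ← Real.rpow_mul hp2] at hpow
    have e1 : (q-1)/q*q = q - 1 := by field_simp
    have e2 : 1/q*q = 1 := by field_simp
    rw [e1, e2, Real.rpow_one] at hpow
    have hq_pow : q^(q-1) * q = q^q := by
      rw [← Real.rpow_add_one hq0.ne' (q-1)]
      norm_num
    have e3 : (q/(q-1))^(q-1) * (q*u) = q^q * (q-1)^(1-q) * u := by
      rw [Real.div_rpow hq0.le hq1.le, show (1-q) = -(q-1) by ring, Real.rpow_neg hq1.le,
        ← hq_pow]
      field_simp
    rw [← e3]
    exact hpow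

lemma core2 (q lam ρ : ℝ) (hq : 1 < q) (hlam : 0 < lam) (hρ : 0 < ρ) :
    lam^2 * (ρ^2 - lam^2) ≤ (q-1)^(q-1) * q^(-q) * (lam^(2-q) * ρ^q)^2 := by
  have hq0 : 0 < q := by linarith
  have hq1 : 0 < q - 1 := by linarith
  have hRpos : 0 < (q-1)^(q-1) * q^(-q) * (lam^(2-q) * ρ^q)^2 :=
    mul_pos (mul_pos (Real.rpow_pos_of_pos hq1 _) (Real.rpow_pos_of_pos hq0 _))
      (pow_pos (mul_pos (Real.rpow_pos_of_pos hlam _) (Real.rpow_pos_of_pos hρ _)) 2)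
  rcases le_or_gt ρ lam with h | h
  · nlinarith [hRpos, mul_nonneg (sq_nonneg lam) (by nlinarith : (0:ℝ) ≤ lam^2 - ρ^2)]
  · set u := ρ^2/lam^2 - 1 with hu_def
    have hlam2 : (0:ℝ) < lam^2 := by positivity
    have hu : 0 ≤ u := by
      rw [hu_def, sub_nonneg, le_div_iff₀ hlam2]
      nlinarith
    have hA := amgm q u hq hu
    have h1u : 1 + u = ρ^2/lam^2 := by rw [hu_def]; ring
    have hcoef : (0:ℝ) ≤ (q-1)^(q-1)*q^(-q)*lam^4 := by
      have := Real.rpow_pos_of_pos hq1 (q-1)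
      have := Real.rpow_pos_of_pos hq0 (-q)
      positivity
    have hmul := mul_le_mul_of_nonneg_left hA hcoef
    have c1 : (q-1)^(q-1) * (q-1)^(1-q) = 1 := by
      rw [← Real.rpow_add hq1]; norm_num
    have c2 : q^(-q) * q^q = 1 := by
      rw [← Real.rpow_add hq0]; norm_num
    have eL : (q-1)^(q-1)*q^(-q)*lam^4 * (q^q*(q-1)^(1-q)*u) = lam^2 * (ρ^2 - lam^2) := by
      calc (q-1)^(q-1)*q^(-q)*lam^4 * (q^q*(q-1)^(1-q)*u)
          = ((q-1)^(q-1)*(q-1)^(1-q)) * (q^(-q)*q^q) * (lam^4*u) := by ring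
        _ = lam^4 * u := by rw [c1, c2]; ring
        _ = lam^2 * (ρ^2 - lam^2) := by rw [hu_def]; field_simp
    have eR : (q-1)^(q-1)*q^(-q)*lam^4 * (1+u)^q = (q-1)^(q-1)*q^(-q)*(lam^(2-q)*ρ^q)^2 := by
      rw [h1u]
      have eR' : lam^4 * (ρ^2/lam^2)^q = (lam^(2-q)*ρ^q)^2 := by
        rw [Real.div_rpow (by positivity) (by positivity),
          ← Real.rpow_natCast ρ 2, ← Real.rpow_natCast lam 2,
          ← Real.rpow_mul hρ.le, ← Real.rpow_mul hlam.le,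
          mul_pow, rpow_two_mul lam hlam.le, rpow_two_mul ρ hρ.le,
          ← Real.rpow_natCast lam 4]
        rw [div_eq_mul_inv, ← Real.rpow_neg hlam.le]
        push_cast
        rw [show (2:ℝ)*(2-q) = 4 + -(2*q) by ring, Real.rpow_add hlam]
        ring
      rw [← eR']
      ring
    rw [eL, eR] at hmul
    exact hmul

lemma aux_sq_le_one (x y : ℝ) (hx : 0 < x) (hy : 0 < y) (h : x^2 * y^2 ≤ 1) : x * y ≤ 1 := by
  nlinarith

lemma aux_mhalf (s c : ℝ) (h : s^2 + c^2 = 1) : -(1/2 : ℝ) ≤ s * c := by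
  nlinarith [sq_nonneg (s + c)]

lemma aux_branch1 (C1 Y ρ s c : ℝ) (h1 : Y ≤ 2*C1) (h2 : -(1/2 : ℝ) ≤ s*c) (hY : 0 < Y) :
    C1 * ρ^2 + Y * ρ^2 * s * c ≥ 0 := by
  nlinarith [sq_nonneg ρ, mul_le_mul_of_nonneg_left h2 (mul_nonneg hY.le (sq_nonneg ρ)),
    mul_nonneg (mul_nonneg hY.le (sq_nonneg ρ)) (by linarith : (0:ℝ) ≤ s*c + 1/2),
    mul_nonneg (sub_nonneg.mpr h1) (sq_nonneg ρ)]

lemma aux_ab (a b lam ρ : ℝ) (ha : 0 ≤ a) (hb : 0 ≤ b) (hsum : a + b = ρ^2)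
    (hmin : a ≤ lam^2) (h2 : 2*lam^2 ≤ ρ^2) : a * b ≤ lam^2 * (ρ^2 - lam^2) := by
  nlinarith [mul_nonneg (sub_nonneg.mpr hmin) (by nlinarith : (0:ℝ) ≤ ρ^2 - lam^2 - a)]


lemma aux_one (ρ s lam : ℝ) (hρ : 0 ≤ ρ) (hs : s < 0) (hlam : 0 < lam)
    (h : 0 < lam + ρ * s) : (ρ*s)^2 ≤ lam^2 := by
  have h1 : ρ * s ≤ 0 := mul_nonpos_of_nonneg_of_nonpos hρ hs.le
  nlinarith [mul_pos (show 0 < lam - ρ*s by linarith) h]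


theorem G_nonneg_on_positive_quadrant
    (q lam Y : ℝ) (hq1 : 1 < q) (hq2 : q < 2) (hlam : 0 < lam) (hY : 0 < Y)
    (C1 C2 : ℝ)
    (hC1 : C1 = 1 / (2 * (2 * (Real.sqrt 2 * lam)) ^ (2 - q)))
    (hC2 : C2 = 1 / 2 ^ (3 - q))
    (hcond : C2 / (Y * lam ^ (2 - q)) ≥ (q - 1) ^ ((q - 1) / 2) * q ^ (-q / 2)) :
    ∀ ρ μ : ℝ, 0 ≤ ρ →
      0 < lam + ρ * Real.cos μ → 0 < lam + ρ * Real.sin μ →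
      (if ρ ≤ Real.sqrt 2 * lam then
          C1 * ρ ^ 2 + Y * ρ ^ 2 * Real.sin μ * Real.cos μ
        else
          C2 * ρ ^ q + Y * ρ ^ 2 * Real.sin μ * Real.cos μ) ≥ 0 := by
  have hq0 : 0 < q := by linarith
  have hqm1 : (0:ℝ) < q - 1 := by linarith
  have hs2 : 0 < Real.sqrt 2 := Real.sqrt_pos.mpr (by norm_num)
  have hD : 0 < Y * lam ^ (2 - q) := mul_pos hY (Real.rpow_pos_of_pos hlam _)
  have hgpos : 0 < (q-1)^((q-1)/2) * q^(-q/2) :=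
    mul_pos (Real.rpow_pos_of_pos hqm1 _) (Real.rpow_pos_of_pos hq0 _)
  have h1 : (q-1)^((q-1)/2) * q^(-q/2) * (Y * lam^(2-q)) ≤ C2 := (le_div_iff₀ hD).mp hcond
  have hC2pos : 0 < C2 := lt_of_lt_of_le (mul_pos hgpos hD) h1
  have hBpos : 0 < 2 * (Real.sqrt 2 * lam) := mul_pos two_pos (mul_pos hs2 hlam)
  have hBq : 0 < (2 * (Real.sqrt 2 * lam)) ^ (2-q) := Real.rpow_pos_of_pos hBpos _
  have hC1pos : 0 < C1 := by rw [hC1]; exact div_pos one_pos (mul_pos two_pos hBq)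
  -- squared hcond
  have e1 : ((q-1)^((q-1)/2))^2 = (q-1)^(q-1) := by
    rw [rpow_two_mul (q-1) hqm1.le, show 2*((q-1)/2) = q-1 by ring]
  have e2 : (q^(-q/2))^2 = q^(-q) := by
    rw [rpow_two_mul q hq0.le, show 2*(-q/2) = -q by ring]
  have hsq : (q-1)^(q-1) * q^(-q) * Y^2 * (lam^(2-q))^2 ≤ C2^2 := by
    calc (q-1)^(q-1) * q^(-q) * Y^2 * (lam^(2-q))^2
        = ((q-1)^((q-1)/2) * q^(-q/2) * (Y*lam^(2-q)))^2 := by rw [← e1, ← e2]; ring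
      _ ≤ C2^2 := pow_le_pow_left₀ (le_of_lt (mul_pos hgpos hD)) h1 2
  -- basic rpow identities
  have c1 : (q-1)^(q-1) * (q-1)^(1-q) = 1 := by rw [← Real.rpow_add hqm1]; norm_num
  have c2 : q^(-q) * q^q = 1 := by rw [← Real.rpow_add hq0]; norm_num
  have c3 : (2:ℝ)^(-q) * 2^q = 1 := by rw [← Real.rpow_add (by norm_num : (0:ℝ) < 2)]; norm_num
  -- 2^(-q) ≤ (q-1)^(q-1) * q^(-q)
  have h2q : (2:ℝ)^(-q) ≤ (q-1)^(q-1) * q^(-q) := by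
    have hamgm := amgm q 1 hq1 zero_le_one
    have hpos : (0:ℝ) < 2^(-q) * q^(-q) * (q-1)^(q-1) :=
      mul_pos (mul_pos (Real.rpow_pos_of_pos (by norm_num) _) (Real.rpow_pos_of_pos hq0 _))
        (Real.rpow_pos_of_pos hqm1 _)
    have hmul := mul_le_mul_of_nonneg_left hamgm hpos.le
    have eA : (2:ℝ)^(-q) * q^(-q) * (q-1)^(q-1) * (q^q*(q-1)^(1-q)*1) = 2^(-q) := by
      calc (2:ℝ)^(-q) * q^(-q) * (q-1)^(q-1) * (q^q*(q-1)^(1-q)*1)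
          = (2:ℝ)^(-q) * (q^(-q)*q^q) * ((q-1)^(q-1)*(q-1)^(1-q)) := by ring
        _ = 2^(-q) := by rw [c2, c1]; ring
    have eB : (2:ℝ)^(-q) * q^(-q) * (q-1)^(q-1) * (1+1)^q = (q-1)^(q-1)*q^(-q) := by
      rw [show ((1:ℝ)+1) = 2 by norm_num]
      calc (2:ℝ)^(-q) * q^(-q) * (q-1)^(q-1) * 2^q
          = ((2:ℝ)^(-q)*2^q) * (q^(-q)*(q-1)^(q-1)) := by ring
        _ = (q-1)^(q-1)*q^(-q) := by rw [c3]; ring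
    rw [eA, eB] at hmul
    exact hmul
  -- C2^2 = 2^(2q-6)
  have eC2sq : C2^2 = (2:ℝ)^(2*q-6) := by
    rw [hC2, div_pow, one_pow, rpow_two_mul 2 (by norm_num : (0:ℝ) ≤ 2),
      show (2*(3-q) : ℝ) = -(2*q-6) by ring, Real.rpow_neg (by norm_num : (0:ℝ) ≤ 2),
      one_div, inv_inv]
  have e2S : (2:ℝ) * Real.sqrt 2 = 2^((3:ℝ)/2) := by
    rw [Real.sqrt_eq_rpow, show ((3:ℝ)/2) = 1 + 1/2 by norm_num,
      Real.rpow_add (by norm_num : (0:ℝ) < 2), Real.rpow_one]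
  have eBsq : ((2 * (Real.sqrt 2 * lam)) ^ (2-q))^2 = (2:ℝ)^(6-3*q) * (lam^(2-q))^2 := by
    rw [show 2*(Real.sqrt 2 * lam) = (2*Real.sqrt 2)*lam by ring,
      Real.mul_rpow (by positivity) hlam.le, mul_pow, e2S,
      rpow_two_mul (((2:ℝ))^((3:ℝ)/2)) (by positivity) (2-q),
      ← Real.rpow_mul (by norm_num : (0:ℝ) ≤ 2),
      show (3:ℝ)/2*(2*(2-q)) = 6-3*q by ring]
  -- Y ≤ 2 C1
  have hY1 : Y ≤ 2*C1 := by
    have hPQ : (0:ℝ) < (q-1)^(q-1)*q^(-q) :=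
      mul_pos (Real.rpow_pos_of_pos hqm1 _) (Real.rpow_pos_of_pos hq0 _)
    have step : Y^2 * (((2 * (Real.sqrt 2 * lam)) ^ (2-q))^2) * ((q-1)^(q-1)*q^(-q))
        ≤ 1 * ((q-1)^(q-1)*q^(-q)) := by
      calc Y^2 * (((2 * (Real.sqrt 2 * lam)) ^ (2-q))^2) * ((q-1)^(q-1)*q^(-q))
          = ((q-1)^(q-1) * q^(-q) * Y^2 * (lam^(2-q))^2) * 2^(6-3*q) := by rw [eBsq]; ring
        _ ≤ C2^2 * 2^(6-3*q) := by
            apply mul_le_mul_of_nonneg_right hsq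
            positivity
        _ = (2:ℝ)^(-q) := by
            rw [eC2sq, ← Real.rpow_add (by norm_num : (0:ℝ) < 2),
              show (2*q-6+(6-3*q) : ℝ) = -q by ring]
        _ ≤ 1 * ((q-1)^(q-1)*q^(-q)) := by rw [one_mul]; exact h2q
    have hsq1 : Y^2 * (((2 * (Real.sqrt 2 * lam)) ^ (2-q))^2) ≤ 1 :=
      le_of_mul_le_mul_right step hPQ
    have hYB : Y * (2 * (Real.sqrt 2 * lam)) ^ (2-q) ≤ 1 := aux_sq_le_one _ _ hY hBq hsq1
    rw [hC1,
      show 2 * (1 / (2 * (2 * (Real.sqrt 2 * lam)) ^ (2 - q)))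
        = 1 / ((2 * (Real.sqrt 2 * lam)) ^ (2 - q)) by field_simp,
      le_div_iff₀ hBq]
    exact hYB
  -- main part
  intro ρ μ hρ hcpos hspos
  have htrig : Real.sin μ ^ 2 + Real.cos μ ^ 2 = 1 := Real.sin_sq_add_cos_sq μ
  rcases le_or_gt 0 (Real.sin μ * Real.cos μ) with hsc | hsc
  · -- easy case
    have h1' : 0 ≤ Y * ρ^2 * Real.sin μ * Real.cos μ := by
      have e : Y * ρ^2 * Real.sin μ * Real.cos μ = (Y * ρ^2) * (Real.sin μ * Real.cos μ) := by
        ring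
      rw [e]; exact mul_nonneg (mul_nonneg hY.le (sq_nonneg ρ)) hsc
    split_ifs with hif
    · have h2' := mul_nonneg hC1pos.le (sq_nonneg ρ)
      linarith
    · have h2' : 0 ≤ C2 * ρ^q := mul_nonneg hC2pos.le (Real.rpow_nonneg hρ q)
      linarith
  · -- sin μ * cos μ < 0
    rcases hρ.eq_or_lt with h0 | hρpos
    · have h0' : ρ = 0 := h0.symm
      subst h0'
      rw [if_pos (mul_nonneg (Real.sqrt_nonneg 2) hlam.le)]
      norm_num
    have hmhalf : -(1/2 : ℝ) ≤ Real.sin μ * Real.cos μ := aux_mhalf _ _ htrig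
    split_ifs with hif
    · exact aux_branch1 C1 Y ρ _ _ hY1 hmhalf hY
    · -- second branch
      push_neg at hif
      have h2lam : 2*lam^2 ≤ ρ^2 := by
        have hp := pow_lt_pow_left₀ hif (mul_nonneg (Real.sqrt_nonneg 2) hlam.le) two_ne_zero
        rw [mul_pow, Real.sq_sqrt (by norm_num : (0:ℝ) ≤ 2)] at hp
        linarith
      have hone : (ρ*Real.sin μ)^2 ≤ lam^2 ∨ (ρ*Real.cos μ)^2 ≤ lam^2 := by
        rcases mul_neg_iff.mp hsc with ⟨hspos', hcneg⟩ | ⟨hsneg, hcpos'⟩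
        · right; exact aux_one ρ _ lam hρ hcneg hlam hcpos
        · left; exact aux_one ρ _ lam hρ hsneg hlam hspos
      have hsum : (ρ*Real.sin μ)^2 + (ρ*Real.cos μ)^2 = ρ^2 := by
        linear_combination ρ^2 * htrig
      have hab : (ρ*Real.sin μ)^2 * (ρ*Real.cos μ)^2 ≤ lam^2 * (ρ^2 - lam^2) := by
        rcases hone with h | h
        · exact aux_ab _ _ lam ρ (sq_nonneg _) (sq_nonneg _) hsum h h2lam
        · have hsum' : (ρ*Real.cos μ)^2 + (ρ*Real.sin μ)^2 = ρ^2 := by linarith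
          have := aux_ab _ _ lam ρ (sq_nonneg _) (sq_nonneg _) hsum' h h2lam
          linarith [this]
      have hcore := core2 q lam ρ hq1 hlam hρpos
      have hCρ : 0 < C2 * ρ^q := mul_pos hC2pos (Real.rpow_pos_of_pos hρpos q)
      have hx : 0 ≤ Y*ρ^2*(-(Real.sin μ * Real.cos μ)) := by
        have e : Y*ρ^2*(-(Real.sin μ * Real.cos μ)) = (Y*ρ^2)*(-(Real.sin μ * Real.cos μ)) := by
          ring
        rw [e]
        exact mul_nonneg (mul_nonneg hY.le (sq_nonneg ρ)) (by linarith)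
      have key : (Y*ρ^2*(-(Real.sin μ * Real.cos μ)))^2 ≤ (C2*ρ^q)^2 := by
        calc (Y*ρ^2*(-(Real.sin μ * Real.cos μ)))^2
            = Y^2 * ((ρ*Real.sin μ)^2 * (ρ*Real.cos μ)^2) := by ring
          _ ≤ Y^2 * (lam^2 * (ρ^2 - lam^2)) := mul_le_mul_of_nonneg_left hab (sq_nonneg Y)
          _ ≤ Y^2 * ((q-1)^(q-1) * q^(-q) * (lam^(2-q) * ρ^q)^2) :=
              mul_le_mul_of_nonneg_left hcore (sq_nonneg Y)
          _ = ((q-1)^(q-1) * q^(-q) * Y^2 * (lam^(2-q))^2) * (ρ^q)^2 := by ring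
          _ ≤ C2^2 * (ρ^q)^2 := mul_le_mul_of_nonneg_right hsq (sq_nonneg _)
          _ = (C2*ρ^q)^2 := by ring
      have hfin := Real.sqrt_le_sqrt key
      rw [Real.sqrt_sq hx, Real.sqrt_sq hCρ.le] at hfin
      linarith [hfin]
end

section
/- For 2 < q < 3, the supremum of 4|sin φ| |cos φ|^{q−2} |cos θ| |sin θ|^{q−1} over θ ∈ [0, π] and φ ∈ [π/2, 5π/4] equals 4(q−2)^{(q−2)/2} q^{−q/2}. -/
open Real Set


lemma key_ineq (p a b : ℝ) (hp : 0 < p) (ha : 0 ≤ a) (hb : 0 ≤ b)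
    (hab : a ^ 2 + b ^ 2 = 1) :
    a * b ^ p ≤ p ^ (p / 2) * (p + 1) ^ (-(p + 1) / 2) := by
  have hp1 : (0:ℝ) < p + 1 := by linarith
  have hRpos : (0:ℝ) < p ^ (p / 2) * (p + 1) ^ (-(p + 1) / 2) := by positivity
  rcases eq_or_lt_of_le ha with ha0 | ha0
  · rw [← ha0, zero_mul]; exact hRpos.le
  rcases eq_or_lt_of_le hb with hb0 | hb0
  · rw [← hb0, Real.zero_rpow hp.ne', mul_zero]; exact hRpos.le
  rw [← Real.log_le_log_iff (by positivity) hRpos,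
    Real.log_mul ha0.ne' (Real.rpow_pos_of_pos hb0 p).ne',
    Real.log_mul (Real.rpow_pos_of_pos hp _).ne' (Real.rpow_pos_of_pos hp1 _).ne',
    Real.log_rpow hb0, Real.log_rpow hp, Real.log_rpow hp1]
  have hx : (0:ℝ) < (p+1) * a^2 := by positivity
  have hy : (0:ℝ) < (p+1)/p * b^2 := by positivity
  have hw : (1/(p+1)) + (p/(p+1)) = 1 := by field_simp; ring
  have hcc := strictConcaveOn_log_Ioi.concaveOn.2 (Set.mem_Ioi.mpr hx)
    (Set.mem_Ioi.mpr hy) (by positivity) (by positivity) hw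
  simp only [smul_eq_mul] at hcc
  have harg : (1/(p+1)) * ((p+1) * a^2) + (p/(p+1)) * ((p+1)/p * b^2) = 1 := by
    have h : (1/(p+1)) * ((p+1) * a^2) + (p/(p+1)) * ((p+1)/p * b^2) = a^2 + b^2 := by
      field_simp
    rw [h, hab]
  rw [harg, Real.log_one,
    Real.log_mul hp1.ne' (pow_ne_zero 2 ha0.ne'),
    Real.log_mul (div_pos hp1 hp).ne' (pow_ne_zero 2 hb0.ne'),
    Real.log_div hp1.ne' hp.ne', Real.log_pow, Real.log_pow] at hcc
  push_cast at hcc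
  have hfinal := mul_le_mul_of_nonneg_left hcc hp1.le
  rw [mul_zero] at hfinal
  have hexp : (p+1) * (1/(p+1) * (Real.log (p+1) + 2 * Real.log a)
      + p/(p+1) * (Real.log (p+1) - Real.log p + 2 * Real.log b))
      = (Real.log (p+1) + 2 * Real.log a)
        + p * (Real.log (p+1) - Real.log p + 2 * Real.log b) := by
    field_simp
  have hY : (Real.log (p+1) + 2 * Real.log a)
      + p * (Real.log (p+1) - Real.log p + 2 * Real.log b) ≤ 0 := by
    nlinarith [hfinal, hexp]
  nlinarith [hY]


lemma key_eq (p : ℝ) (hp : 0 < p) :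
    Real.sqrt (1/(p+1)) * Real.sqrt (p/(p+1)) ^ p
      = p ^ (p / 2) * (p + 1) ^ (-(p + 1) / 2) := by
  have hp1 : (0:ℝ) < p + 1 := by linarith
  have h1 : (0:ℝ) < √(1/(p+1)) := Real.sqrt_pos.mpr (by positivity)
  have h2 : (0:ℝ) < √(p/(p+1)) := Real.sqrt_pos.mpr (by positivity)
  have hL : (0:ℝ) < √(1/(p+1)) * √(p/(p+1)) ^ p := by positivity
  have hR : (0:ℝ) < p ^ (p / 2) * (p + 1) ^ (-(p + 1) / 2) := by positivity
  apply Real.log_injOn_pos (Set.mem_Ioi.mpr hL) (Set.mem_Ioi.mpr hR)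
  rw [Real.log_mul h1.ne' (Real.rpow_pos_of_pos h2 p).ne',
    Real.log_mul (Real.rpow_pos_of_pos hp _).ne' (Real.rpow_pos_of_pos hp1 _).ne',
    Real.log_rpow h2, Real.log_rpow hp, Real.log_rpow hp1,
    Real.log_sqrt (by positivity), Real.log_sqrt (by positivity),
    Real.log_div one_ne_zero hp1.ne', Real.log_div hp.ne' hp1.ne', Real.log_one]
  ring

theorem sup_m1_eq
    (q : ℝ) (hq1 : 2 < q) (hq2 : q < 3) :
    sSup {x : ℝ | ∃ θ ∈ Icc (0:ℝ) π, ∃ φ ∈ Icc (π / 2) (5 * π / 4),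
        x = 4 * |Real.sin φ| * |Real.cos φ| ^ (q - 2) * |Real.cos θ|
              * |Real.sin θ| ^ (q - 1)}
      = 4 * (q - 2) ^ ((q - 2) / 2) * q ^ (-q / 2) := by
  have hq0 : (0:ℝ) < q := by linarith
  have hq1' : (0:ℝ) < q - 1 := by linarith
  have hq2' : (0:ℝ) < q - 2 := by linarith
  have hcancel : (q-1:ℝ) ^ (-(q-1)/2) * (q-1) ^ ((q-1)/2) = 1 := by
    rw [← Real.rpow_add hq1', show -(q-1)/2 + (q-1)/2 = 0 by ring, Real.rpow_zero]
  apply IsGreatest.csSup_eq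
  constructor
  · -- membership: the max is attained
    refine ⟨Real.arccos (Real.sqrt (1/q)), ⟨Real.arccos_nonneg _, Real.arccos_le_pi _⟩,
      Real.arccos (-Real.sqrt ((q-2)/(q-1))), ⟨?_, ?_⟩, ?_⟩
    · rw [Real.arccos_eq_pi_div_two_sub_arcsin]
      have : Real.arcsin (-Real.sqrt ((q-2)/(q-1))) ≤ 0 :=
        Real.arcsin_nonpos.mpr (neg_nonpos.mpr (Real.sqrt_nonneg _))
      linarith
    · have := Real.arccos_le_pi (-Real.sqrt ((q-2)/(q-1)))
      have hπ := Real.pi_pos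
      linarith
    · have hr1 : (q-2)/(q-1) ≤ 1 := by
        rw [div_le_one hq1']; linarith
      have hcφ : Real.cos (Real.arccos (-Real.sqrt ((q-2)/(q-1)))) = -Real.sqrt ((q-2)/(q-1)) :=
        Real.cos_arccos (by linarith [Real.sqrt_le_one.mpr hr1])
          (by linarith [Real.sqrt_nonneg ((q-2)/(q-1))])
      have hsφ : Real.sin (Real.arccos (-Real.sqrt ((q-2)/(q-1)))) = Real.sqrt (1/(q-1)) := by
        rw [Real.sin_arccos, neg_sq, Real.sq_sqrt (by positivity : (0:ℝ) ≤ (q-2)/(q-1))]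
        congr 1
        field_simp
        norm_num
      have hq1le : 1/q ≤ 1 := by rw [div_le_one hq0]; linarith
      have hcθ : Real.cos (Real.arccos (Real.sqrt (1/q))) = Real.sqrt (1/q) :=
        Real.cos_arccos (by linarith [Real.sqrt_nonneg (1/q)]) (Real.sqrt_le_one.mpr hq1le)
      have hsθ : Real.sin (Real.arccos (Real.sqrt (1/q))) = Real.sqrt ((q-1)/q) := by
        rw [Real.sin_arccos, Real.sq_sqrt (by positivity : (0:ℝ) ≤ 1/q)]
        congr 1
        field_simp
      rw [hcφ, hsφ, hcθ, hsθ, abs_neg, abs_of_nonneg (Real.sqrt_nonneg _),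
        abs_of_nonneg (Real.sqrt_nonneg _), abs_of_nonneg (Real.sqrt_nonneg _),
        abs_of_nonneg (Real.sqrt_nonneg _)]
      have e1 := key_eq (q-2) hq2'
      rw [show q-2+1 = q-1 by ring] at e1
      have e2 := key_eq (q-1) hq1'
      rw [show q-1+1 = q by ring] at e2
      calc 4 * (q - 2) ^ ((q - 2) / 2) * q ^ (-q / 2)
          = 4 * (q - 2) ^ ((q - 2) / 2)
            * ((q-1) ^ (-(q-1)/2) * (q-1) ^ ((q-1)/2)) * q ^ (-q / 2) := by
            rw [hcancel]; ring
        _ = 4 * ((q-2) ^ ((q-2)/2) * (q-1) ^ (-(q-1)/2))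
            * ((q-1) ^ ((q-1)/2) * q ^ (-q/2)) := by ring
        _ = 4 * (Real.sqrt (1/(q-1)) * Real.sqrt ((q-2)/(q-1)) ^ (q-2))
            * (Real.sqrt (1/q) * Real.sqrt ((q-1)/q) ^ (q-1)) := by rw [e1, e2]
        _ = 4 * Real.sqrt (1/(q-1)) * Real.sqrt ((q-2)/(q-1)) ^ (q - 2)
            * Real.sqrt (1/q) * Real.sqrt ((q-1)/q) ^ (q - 1) := by ring
  · -- upper bound
    rintro x ⟨θ, hθ, φ, hφ, rfl⟩
    have h1 := key_ineq (q-1) |Real.cos θ| |Real.sin θ| hq1' (abs_nonneg _) (abs_nonneg _)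
      (by rw [sq_abs, sq_abs]; exact Real.cos_sq_add_sin_sq θ)
    rw [show q-1+1 = q by ring] at h1
    have h2 := key_ineq (q-2) |Real.sin φ| |Real.cos φ| hq2' (abs_nonneg _) (abs_nonneg _)
      (by rw [sq_abs, sq_abs]; exact Real.sin_sq_add_cos_sq φ)
    rw [show q-2+1 = q-1 by ring] at h2
    calc 4 * |Real.sin φ| * |Real.cos φ| ^ (q - 2) * |Real.cos θ| * |Real.sin θ| ^ (q - 1)
        = 4 * (|Real.sin φ| * |Real.cos φ| ^ (q - 2))
          * (|Real.cos θ| * |Real.sin θ| ^ (q - 1)) := by ring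
      _ ≤ 4 * ((q-2) ^ ((q-2)/2) * (q-1) ^ (-(q-1)/2))
          * ((q-1) ^ ((q-1)/2) * q ^ (-q/2)) := by
          apply mul_le_mul _ h1 (by positivity) (by positivity)
          exact mul_le_mul_of_nonneg_left h2 (by norm_num)
      _ = 4 * (q - 2) ^ ((q - 2) / 2) * q ^ (-q / 2) := by
          calc 4 * ((q-2) ^ ((q-2)/2) * (q-1) ^ (-(q-1)/2))
              * ((q-1) ^ ((q-1)/2) * q ^ (-q/2))
              = 4 * (q-2) ^ ((q-2)/2)
                * ((q-1) ^ (-(q-1)/2) * (q-1) ^ ((q-1)/2)) * q ^ (-q/2) := by ring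
            _ = 4 * (q - 2) ^ ((q - 2) / 2) * q ^ (-q / 2) := by rw [hcancel]; ring
end
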